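/- (Monotone advantage of playing.) Assume ρ1 > ρ0 and either 0 < p00 − p10 < 1/5 or 0 < p10 − p00 < 1/3. Then the advantage function D(π) := L1V_w(π,1) − L0V_w(π,1) is strictly decreasing on [0,1]: for all 0 ≤ π < π' ≤ 1, D(π') < D(π). -/

import Mathlib

open Set

noncomputable section

/-- Expected immediate reward (success probability) at belief `π`. -/
def rhoB (ρ0 ρ1 π : ℝ) : ℝ := π * ρ0 + (1 - π) * ρ1

/-- Belief update after a play resulting in success. -/
def Gam1 (p00 p10 ρ0 ρ1 π : ℝ) : ℝ :=
  (π * ρ0 * p00 + (1 - π) * ρ1 * p10) / (π * ρ0 + (1 - π) * ρ1)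

/-- Belief update after a play resulting in failure. -/
def Gam0 (p00 p10 ρ0 ρ1 π : ℝ) : ℝ :=
  (π * (1 - ρ0) * p00 + (1 - π) * (1 - ρ1) * p10) /
    (π * (1 - ρ0) + (1 - π) * (1 - ρ1))

/-- Belief update without observation (natural Markov evolution). -/
def gam (p00 p10 π : ℝ) : ℝ := π * p00 + (1 - π) * p10

/-- Action value of playing an available arm. -/
def Lact1 (p00 p10 ρ0 ρ1 β θ11 : ℝ) (V : ℝ → Bool → ℝ) (π : ℝ) : ℝ :=
  rhoB ρ0 ρ1 π
    + β * rhoB ρ0 ρ1 π *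
        (θ11 * V (Gam1 p00 p10 ρ0 ρ1 π) true +
          (1 - θ11) * V (Gam1 p00 p10 ρ0 ρ1 π) false)
    + β * (1 - rhoB ρ0 ρ1 π) *
        (θ11 * V (Gam0 p00 p10 ρ0 ρ1 π) true +
          (1 - θ11) * V (Gam0 p00 p10 ρ0 ρ1 π) false)

/-- Action value of not playing an available arm (subsidy `w`). -/
def Lact0a (p00 p10 β w θ01 : ℝ) (V : ℝ → Bool → ℝ) (π : ℝ) : ℝ :=
  w + β * (θ01 * V (gam p00 p10 π) true + (1 - θ01) * V (gam p00 p10 π) false)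

/-- Action value for an unavailable arm (subsidy `w`). -/
def Lact0u (p00 p10 β w θ00 : ℝ) (V : ℝ → Bool → ℝ) (π : ℝ) : ℝ :=
  w + β * (θ00 * V (gam p00 p10 π) true + (1 - θ00) * V (gam p00 p10 π) false)

/-- Bellman operator of the constrained restless single-armed bandit with
stochastic availability; availability `y` is encoded by `Bool`. -/
def TwOp (p00 p10 ρ0 ρ1 β w θ11 θ01 θ00 : ℝ) (V : ℝ → Bool → ℝ) : ℝ → Bool → ℝ :=
  fun π y =>
    if y then max (Lact1 p00 p10 ρ0 ρ1 β θ11 V π) (Lact0a p00 p10 β w θ01 V π)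
    else Lact0u p00 p10 β w θ00 V π

/-- Bounded on the belief space `[0,1] × {0,1}`. -/
def BddOnIcc (V : ℝ → Bool → ℝ) : Prop :=
  ∃ C : ℝ, ∀ π ∈ Icc (0:ℝ) 1, ∀ y : Bool, |V π y| ≤ C

/-- Fixed point of an operator on the belief space `[0,1] × {0,1}`. -/
def FixedOnIcc (T : (ℝ → Bool → ℝ) → ℝ → Bool → ℝ) (V : ℝ → Bool → ℝ) : Prop :=
  ∀ π ∈ Icc (0:ℝ) 1, ∀ y : Bool, T V π y = V π y

section aux
variable {p00 p10 ρ0 ρ1 : ℝ}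

lemma rhoB_pos (hρ0 : 0 < ρ0) (hρ01 : ρ0 < ρ1) {π : ℝ} (hπ : π ∈ Icc (0:ℝ) 1) :
    0 < rhoB ρ0 ρ1 π := by
  obtain ⟨h0, h1⟩ := hπ; unfold rhoB; nlinarith

lemma rhoB_lt_one (hρ01 : ρ0 < ρ1) (hρ1 : ρ1 < 1) {π : ℝ} (hπ : π ∈ Icc (0:ℝ) 1) :
    rhoB ρ0 ρ1 π < 1 := by
  obtain ⟨h0, h1⟩ := hπ; unfold rhoB; nlinarith

lemma gam_mem (hp00 : p00 ∈ Icc (0:ℝ) 1) (hp10 : p10 ∈ Icc (0:ℝ) 1)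
    {π : ℝ} (hπ : π ∈ Icc (0:ℝ) 1) : gam p00 p10 π ∈ Icc (0:ℝ) 1 := by
  obtain ⟨h0, h1⟩ := hπ
  constructor
  · unfold gam; nlinarith [hp00.1, hp10.1]
  · unfold gam; nlinarith [hp00.2, hp10.2]

lemma Gam1_mem (hp00 : p00 ∈ Icc (0:ℝ) 1) (hp10 : p10 ∈ Icc (0:ℝ) 1)
    (hρ0 : 0 < ρ0) (hρ01 : ρ0 < ρ1) {π : ℝ} (hπ : π ∈ Icc (0:ℝ) 1) :
    Gam1 p00 p10 ρ0 ρ1 π ∈ Icc (0:ℝ) 1 := by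
  obtain ⟨h0, h1⟩ := hπ
  have hden : 0 < π * ρ0 + (1 - π) * ρ1 := rhoB_pos hρ0 hρ01 ⟨h0, h1⟩
  unfold Gam1
  constructor
  · apply div_nonneg _ hden.le
    nlinarith [mul_nonneg (mul_nonneg h0 hρ0.le) hp00.1,
      mul_nonneg (mul_nonneg (by linarith : (0:ℝ) ≤ 1 - π) (by linarith : (0:ℝ) ≤ ρ1)) hp10.1]
  · rw [div_le_one hden]
    nlinarith [mul_nonneg (mul_nonneg h0 hρ0.le) (by linarith [hp00.2] : (0:ℝ) ≤ 1 - p00),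
      mul_nonneg (mul_nonneg (by linarith : (0:ℝ) ≤ 1 - π) (by linarith : (0:ℝ) ≤ ρ1)) (by linarith [hp10.2] : (0:ℝ) ≤ 1 - p10)]

lemma Gam0_mem (hp00 : p00 ∈ Icc (0:ℝ) 1) (hp10 : p10 ∈ Icc (0:ℝ) 1)
    (hρ01 : ρ0 < ρ1) (hρ1 : ρ1 < 1) {π : ℝ} (hπ : π ∈ Icc (0:ℝ) 1) :
    Gam0 p00 p10 ρ0 ρ1 π ∈ Icc (0:ℝ) 1 := by
  obtain ⟨h0, h1⟩ := hπ
  have hden : 0 < π * (1 - ρ0) + (1 - π) * (1 - ρ1) := by nlinarith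
  unfold Gam0
  constructor
  · apply div_nonneg _ hden.le
    nlinarith [mul_nonneg (mul_nonneg h0 (by linarith : (0:ℝ) ≤ 1 - ρ0)) hp00.1,
      mul_nonneg (mul_nonneg (by linarith : (0:ℝ) ≤ 1 - π) (by linarith : (0:ℝ) ≤ 1 - ρ1)) hp10.1]
  · rw [div_le_one hden]
    nlinarith [mul_nonneg (mul_nonneg h0 (by linarith : (0:ℝ) ≤ 1 - ρ0)) (by linarith [hp00.2] : (0:ℝ) ≤ 1 - p00),
      mul_nonneg (mul_nonneg (by linarith : (0:ℝ) ≤ 1 - π) (by linarith : (0:ℝ) ≤ 1 - ρ1)) (by linarith [hp10.2] : (0:ℝ) ≤ 1 - p10)]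

lemma Gam1_diff (hρ0 : 0 < ρ0) (hρ01 : ρ0 < ρ1)
    {π π' : ℝ} (hπ : π ∈ Icc (0:ℝ) 1) (hπ' : π' ∈ Icc (0:ℝ) 1) :
    Gam1 p00 p10 ρ0 ρ1 π - Gam1 p00 p10 ρ0 ρ1 π' =
      (ρ0 * ρ1 / (rhoB ρ0 ρ1 π * rhoB ρ0 ρ1 π')) * ((p00 - p10) * (π - π')) := by
  have h1 : rhoB ρ0 ρ1 π ≠ 0 := (rhoB_pos hρ0 hρ01 hπ).ne'
  have h2 : rhoB ρ0 ρ1 π' ≠ 0 := (rhoB_pos hρ0 hρ01 hπ').ne'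
  unfold Gam1 rhoB at *
  rw [div_sub_div _ _ h1 h2, div_mul_eq_mul_div,
    div_eq_div_iff (mul_ne_zero h1 h2) (mul_ne_zero h1 h2)]
  ring

lemma Gam0_diff (hρ01 : ρ0 < ρ1) (hρ1 : ρ1 < 1)
    {π π' : ℝ} (hπ : π ∈ Icc (0:ℝ) 1) (hπ' : π' ∈ Icc (0:ℝ) 1) :
    Gam0 p00 p10 ρ0 ρ1 π - Gam0 p00 p10 ρ0 ρ1 π' =
      ((1 - ρ0) * (1 - ρ1) / ((1 - rhoB ρ0 ρ1 π) * (1 - rhoB ρ0 ρ1 π'))) *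
        ((p00 - p10) * (π - π')) := by
  obtain ⟨h0, h1⟩ := hπ; obtain ⟨h0', h1'⟩ := hπ'
  have h1n : (1:ℝ) - rhoB ρ0 ρ1 π ≠ 0 := by unfold rhoB; nlinarith
  have h2n : (1:ℝ) - rhoB ρ0 ρ1 π' ≠ 0 := by unfold rhoB; nlinarith
  have e1 : π * (1 - ρ0) + (1 - π) * (1 - ρ1) = 1 - rhoB ρ0 ρ1 π := by unfold rhoB; ring
  have e2 : π' * (1 - ρ0) + (1 - π') * (1 - ρ1) = 1 - rhoB ρ0 ρ1 π' := by unfold rhoB; ring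
  unfold Gam0
  rw [e1, e2]
  unfold rhoB at *
  rw [div_sub_div _ _ h1n h2n, div_mul_eq_mul_div,
    div_eq_div_iff (mul_ne_zero h1n h2n) (mul_ne_zero h1n h2n)]
  ring

lemma Gam10_diff (hρ0 : 0 < ρ0) (hρ01 : ρ0 < ρ1) (hρ1 : ρ1 < 1)
    {π : ℝ} (hπ : π ∈ Icc (0:ℝ) 1) :
    Gam1 p00 p10 ρ0 ρ1 π - Gam0 p00 p10 ρ0 ρ1 π =
      (π * (1 - π) * (ρ1 - ρ0) / (rhoB ρ0 ρ1 π * (1 - rhoB ρ0 ρ1 π))) * (p10 - p00) := by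
  obtain ⟨h0, h1⟩ := hπ
  have h1n : rhoB ρ0 ρ1 π ≠ 0 := (rhoB_pos hρ0 hρ01 ⟨h0, h1⟩).ne'
  have h2n : (1:ℝ) - rhoB ρ0 ρ1 π ≠ 0 := by unfold rhoB; nlinarith
  have e1 : π * (1 - ρ0) + (1 - π) * (1 - ρ1) = 1 - rhoB ρ0 ρ1 π := by unfold rhoB; ring
  unfold Gam1 Gam0
  rw [e1]
  have e0 : π * ρ0 + (1 - π) * ρ1 = rhoB ρ0 ρ1 π := rfl
  rw [e0]
  unfold rhoB at *
  field_simp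
  ring

end aux

section key
variable {p00 p10 ρ0 ρ1 : ℝ}

lemma sum_bound (hρ0 : 0 < ρ0) (hρ01 : ρ0 < ρ1) (hρ1 : ρ1 < 1)
    {π π' : ℝ} (hπ : π ∈ Icc (0:ℝ) 1) (hπ' : π' ∈ Icc (0:ℝ) 1) :
    rhoB ρ0 ρ1 π * |Gam1 p00 p10 ρ0 ρ1 π - Gam1 p00 p10 ρ0 ρ1 π'|
      + ((ρ1 - ρ0) * |π - π'|) * |Gam1 p00 p10 ρ0 ρ1 π' - Gam0 p00 p10 ρ0 ρ1 π'|
      + (1 - rhoB ρ0 ρ1 π) * |Gam0 p00 p10 ρ0 ρ1 π - Gam0 p00 p10 ρ0 ρ1 π'|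
    = |p00 - p10| * |π - π'| := by
  have hr : 0 < rhoB ρ0 ρ1 π := rhoB_pos hρ0 hρ01 hπ
  have hr1 : rhoB ρ0 ρ1 π < 1 := rhoB_lt_one hρ01 hρ1 hπ
  have hr' : 0 < rhoB ρ0 ρ1 π' := rhoB_pos hρ0 hρ01 hπ'
  have hr1' : rhoB ρ0 ρ1 π' < 1 := rhoB_lt_one hρ01 hρ1 hπ'
  obtain ⟨h0', h1'⟩ := hπ'
  rw [Gam1_diff hρ0 hρ01 hπ ⟨h0', h1'⟩, Gam0_diff hρ01 hρ1 hπ ⟨h0', h1'⟩,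
    Gam10_diff hρ0 hρ01 hρ1 ⟨h0', h1'⟩]
  rw [abs_mul, abs_mul, abs_mul, abs_mul, abs_mul]
  rw [abs_of_pos (div_pos (mul_pos hρ0 (by linarith)) (mul_pos hr hr'))]
  rw [abs_of_pos (show (0:ℝ) < (1 - ρ0) * (1 - ρ1) / ((1 - rhoB ρ0 ρ1 π) * (1 - rhoB ρ0 ρ1 π')) by
    apply div_pos (by nlinarith) (by nlinarith))]
  rw [abs_of_nonneg (show (0:ℝ) ≤ π' * (1 - π') * (ρ1 - ρ0) / (rhoB ρ0 ρ1 π' * (1 - rhoB ρ0 ρ1 π')) by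
    apply div_nonneg (by nlinarith [mul_nonneg h0' (by linarith : (0:ℝ) ≤ 1 - π')]) (by nlinarith))]
  rw [show |p10 - p00| = |p00 - p10| from abs_sub_comm _ _]
  -- now a pure algebraic identity; set a := |p00-p10|, b := |π-π'|
  set a := |p00 - p10|
  set b := |π - π'|
  have hrr : rhoB ρ0 ρ1 π ≠ 0 := hr.ne'
  have hrr' : rhoB ρ0 ρ1 π' ≠ 0 := hr'.ne'
  have hrr1 : (1:ℝ) - rhoB ρ0 ρ1 π ≠ 0 := by linarith
  have hrr1' : (1:ℝ) - rhoB ρ0 ρ1 π' ≠ 0 := by linarith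
  have hrdef : rhoB ρ0 ρ1 π' = π' * ρ0 + (1 - π') * ρ1 := rfl
  field_simp
  rw [hrdef]
  ring

lemma B_diff_bound (hp00 : p00 ∈ Icc (0:ℝ) 1) (hp10 : p10 ∈ Icc (0:ℝ) 1)
    (hρ0 : 0 < ρ0) (hρ01 : ρ0 < ρ1) (hρ1 : ρ1 < 1)
    (f : ℝ → ℝ) (L : ℝ) (hL : 0 ≤ L)
    (hf : ∀ x ∈ Icc (0:ℝ) 1, ∀ x' ∈ Icc (0:ℝ) 1, |f x - f x'| ≤ L * |x - x'|)
    {π π' : ℝ} (hπ : π ∈ Icc (0:ℝ) 1) (hπ' : π' ∈ Icc (0:ℝ) 1) :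
    |(rhoB ρ0 ρ1 π * f (Gam1 p00 p10 ρ0 ρ1 π) + (1 - rhoB ρ0 ρ1 π) * f (Gam0 p00 p10 ρ0 ρ1 π))
      - (rhoB ρ0 ρ1 π' * f (Gam1 p00 p10 ρ0 ρ1 π') + (1 - rhoB ρ0 ρ1 π') * f (Gam0 p00 p10 ρ0 ρ1 π'))|
    ≤ L * (|p00 - p10| * |π - π'|) := by
  have hr : 0 < rhoB ρ0 ρ1 π := rhoB_pos hρ0 hρ01 hπ
  have hr1 : rhoB ρ0 ρ1 π < 1 := rhoB_lt_one hρ01 hρ1 hπ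
  have hdec :
      (rhoB ρ0 ρ1 π * f (Gam1 p00 p10 ρ0 ρ1 π) + (1 - rhoB ρ0 ρ1 π) * f (Gam0 p00 p10 ρ0 ρ1 π))
        - (rhoB ρ0 ρ1 π' * f (Gam1 p00 p10 ρ0 ρ1 π') + (1 - rhoB ρ0 ρ1 π') * f (Gam0 p00 p10 ρ0 ρ1 π'))
      = rhoB ρ0 ρ1 π * (f (Gam1 p00 p10 ρ0 ρ1 π) - f (Gam1 p00 p10 ρ0 ρ1 π'))
        + (rhoB ρ0 ρ1 π - rhoB ρ0 ρ1 π') * (f (Gam1 p00 p10 ρ0 ρ1 π') - f (Gam0 p00 p10 ρ0 ρ1 π'))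
        + (1 - rhoB ρ0 ρ1 π) * (f (Gam0 p00 p10 ρ0 ρ1 π) - f (Gam0 p00 p10 ρ0 ρ1 π')) := by
    ring
  have habs1 : |rhoB ρ0 ρ1 π - rhoB ρ0 ρ1 π'| = (ρ1 - ρ0) * |π - π'| := by
    have : rhoB ρ0 ρ1 π - rhoB ρ0 ρ1 π' = (ρ1 - ρ0) * (π' - π) := by unfold rhoB; ring
    rw [this, abs_mul, abs_of_pos (by linarith : (0:ℝ) < ρ1 - ρ0), abs_sub_comm]
  have hb1 := hf _ (Gam1_mem hp00 hp10 hρ0 hρ01 hπ) _ (Gam1_mem hp00 hp10 hρ0 hρ01 hπ')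
  have hb2 := hf _ (Gam1_mem hp00 hp10 hρ0 hρ01 hπ') _ (Gam0_mem hp00 hp10 hρ01 hρ1 hπ')
  have hb3 := hf _ (Gam0_mem hp00 hp10 hρ01 hρ1 hπ) _ (Gam0_mem hp00 hp10 hρ01 hρ1 hπ')
  calc |_| ≤ rhoB ρ0 ρ1 π * |f (Gam1 p00 p10 ρ0 ρ1 π) - f (Gam1 p00 p10 ρ0 ρ1 π')|
        + ((ρ1 - ρ0) * |π - π'|) * |f (Gam1 p00 p10 ρ0 ρ1 π') - f (Gam0 p00 p10 ρ0 ρ1 π')|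
        + (1 - rhoB ρ0 ρ1 π) * |f (Gam0 p00 p10 ρ0 ρ1 π) - f (Gam0 p00 p10 ρ0 ρ1 π')| := by
        rw [hdec]
        refine le_trans (abs_add_le _ _) ?_
        refine add_le_add (le_trans (abs_add_le _ _) ?_) ?_
        · refine add_le_add ?_ ?_
          · rw [abs_mul, abs_of_pos hr]
          · rw [abs_mul, habs1]
        · rw [abs_mul, abs_of_pos (by linarith : (0:ℝ) < 1 - rhoB ρ0 ρ1 π)]
    _ ≤ rhoB ρ0 ρ1 π * (L * |Gam1 p00 p10 ρ0 ρ1 π - Gam1 p00 p10 ρ0 ρ1 π'|)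
        + ((ρ1 - ρ0) * |π - π'|) * (L * |Gam1 p00 p10 ρ0 ρ1 π' - Gam0 p00 p10 ρ0 ρ1 π'|)
        + (1 - rhoB ρ0 ρ1 π) * (L * |Gam0 p00 p10 ρ0 ρ1 π - Gam0 p00 p10 ρ0 ρ1 π'|) := by
        refine add_le_add (add_le_add ?_ ?_) ?_
        · exact mul_le_mul_of_nonneg_left hb1 hr.le
        · exact mul_le_mul_of_nonneg_left hb2 (mul_nonneg (by linarith) (abs_nonneg _))
        · exact mul_le_mul_of_nonneg_left hb3 (by linarith)
    _ = L * (rhoB ρ0 ρ1 π * |Gam1 p00 p10 ρ0 ρ1 π - Gam1 p00 p10 ρ0 ρ1 π'|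
        + ((ρ1 - ρ0) * |π - π'|) * |Gam1 p00 p10 ρ0 ρ1 π' - Gam0 p00 p10 ρ0 ρ1 π'|
        + (1 - rhoB ρ0 ρ1 π) * |Gam0 p00 p10 ρ0 ρ1 π - Gam0 p00 p10 ρ0 ρ1 π'|) := by ring
    _ = L * (|p00 - p10| * |π - π'|) := by rw [sum_bound hρ0 hρ01 hρ1 hπ hπ']

end key

def LipOn (L : ℝ) (V : ℝ → Bool → ℝ) : Prop :=
  ∀ π ∈ Icc (0:ℝ) 1, ∀ π' ∈ Icc (0:ℝ) 1, ∀ y : Bool, |V π y - V π' y| ≤ L * |π - π'|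

lemma combo_lip {V : ℝ → Bool → ℝ} {L θ : ℝ} (hV : LipOn L V) (hθ : θ ∈ Icc (0:ℝ) 1) :
    ∀ x ∈ Icc (0:ℝ) 1, ∀ x' ∈ Icc (0:ℝ) 1,
      |(θ * V x true + (1 - θ) * V x false) - (θ * V x' true + (1 - θ) * V x' false)|
        ≤ L * |x - x'| := by
  intro x hx x' hx'
  have h1 := hV x hx x' hx' true
  have h0 := hV x hx x' hx' false
  have e : (θ * V x true + (1 - θ) * V x false) - (θ * V x' true + (1 - θ) * V x' false)
      = θ * (V x true - V x' true) + (1 - θ) * (V x false - V x' false) := by ring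
  rw [e]
  refine le_trans (abs_add_le _ _) ?_
  rw [abs_mul, abs_mul, abs_of_nonneg hθ.1, abs_of_nonneg (by linarith [hθ.2] : (0:ℝ) ≤ 1 - θ)]
  have m1 := mul_le_mul_of_nonneg_left h1 hθ.1
  have m0 := mul_le_mul_of_nonneg_left h0 (by linarith [hθ.2] : (0:ℝ) ≤ 1 - θ)
  nlinarith

section op
variable {p00 p10 ρ0 ρ1 β w θ11 θ01 θ00 : ℝ}

lemma gam_abs_diff {π π' : ℝ} :
    |gam p00 p10 π - gam p00 p10 π'| = |p00 - p10| * |π - π'| := by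
  rw [show gam p00 p10 π - gam p00 p10 π' = (p00 - p10) * (π - π') by unfold gam; ring, abs_mul]

lemma rhoB_abs_diff (hρ01 : ρ0 < ρ1) {π π' : ℝ} :
    |rhoB ρ0 ρ1 π - rhoB ρ0 ρ1 π'| = (ρ1 - ρ0) * |π - π'| := by
  rw [show rhoB ρ0 ρ1 π - rhoB ρ0 ρ1 π' = (ρ1 - ρ0) * (π' - π) by unfold rhoB; ring,
    abs_mul, abs_of_pos (by linarith : (0:ℝ) < ρ1 - ρ0), abs_sub_comm]

lemma TwOp_lip (hp00 : p00 ∈ Icc (0:ℝ) 1) (hp10 : p10 ∈ Icc (0:ℝ) 1)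
    (hρ0 : 0 < ρ0) (hρ01 : ρ0 < ρ1) (hρ1 : ρ1 < 1) (hβ : β ∈ Ioo (0:ℝ) 1)
    (hθ11 : θ11 ∈ Icc (0:ℝ) 1) (hθ01 : θ01 ∈ Icc (0:ℝ) 1) (hθ00 : θ00 ∈ Icc (0:ℝ) 1)
    {L : ℝ} (hL : 0 ≤ L) {W : ℝ → Bool → ℝ} (hW : LipOn L W) :
    LipOn ((ρ1 - ρ0) + β * (L * |p00 - p10|)) (TwOp p00 p10 ρ0 ρ1 β w θ11 θ01 θ00 W) := by
  intro π hπ π' hπ' y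
  have hβ0 := hβ.1
  have habs : (0:ℝ) ≤ |π - π'| := abs_nonneg _
  have hpass : ∀ θ : ℝ, θ ∈ Icc (0:ℝ) 1 → ∀ c : ℝ,
      |(c + β * (θ * W (gam p00 p10 π) true + (1 - θ) * W (gam p00 p10 π) false))
        - (c + β * (θ * W (gam p00 p10 π') true + (1 - θ) * W (gam p00 p10 π') false))|
      ≤ ((ρ1 - ρ0) + β * (L * |p00 - p10|)) * |π - π'| := by
    intro θ hθ c
    have hc := combo_lip hW hθ _ (gam_mem hp00 hp10 hπ) _ (gam_mem hp00 hp10 hπ')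
    rw [gam_abs_diff] at hc
    have e : (c + β * (θ * W (gam p00 p10 π) true + (1 - θ) * W (gam p00 p10 π) false))
        - (c + β * (θ * W (gam p00 p10 π') true + (1 - θ) * W (gam p00 p10 π') false))
      = β * ((θ * W (gam p00 p10 π) true + (1 - θ) * W (gam p00 p10 π) false)
          - (θ * W (gam p00 p10 π') true + (1 - θ) * W (gam p00 p10 π') false)) := by ring
    rw [e, abs_mul, abs_of_pos hβ0]
    have := mul_le_mul_of_nonneg_left hc hβ0.le
    nlinarith [abs_nonneg (p00 - p10)]
  cases y with
  | false =>
    show |Lact0u p00 p10 β w θ00 W π - Lact0u p00 p10 β w θ00 W π'| ≤ _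
    exact hpass θ00 hθ00 w
  | true =>
    show |max (Lact1 p00 p10 ρ0 ρ1 β θ11 W π) (Lact0a p00 p10 β w θ01 W π)
        - max (Lact1 p00 p10 ρ0 ρ1 β θ11 W π') (Lact0a p00 p10 β w θ01 W π')| ≤ _
    refine le_trans (abs_max_sub_max_le_max _ _ _ _) (max_le ?_ (hpass θ01 hθ01 w))
    -- active branch
    have hBd := B_diff_bound hp00 hp10 hρ0 hρ01 hρ1
      (fun z => θ11 * W z true + (1 - θ11) * W z false) L hL
      (combo_lip hW hθ11) hπ hπ'
    have e : Lact1 p00 p10 ρ0 ρ1 β θ11 W π - Lact1 p00 p10 ρ0 ρ1 β θ11 W π'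
      = (rhoB ρ0 ρ1 π - rhoB ρ0 ρ1 π')
        + β * ((rhoB ρ0 ρ1 π * (θ11 * W (Gam1 p00 p10 ρ0 ρ1 π) true + (1 - θ11) * W (Gam1 p00 p10 ρ0 ρ1 π) false)
              + (1 - rhoB ρ0 ρ1 π) * (θ11 * W (Gam0 p00 p10 ρ0 ρ1 π) true + (1 - θ11) * W (Gam0 p00 p10 ρ0 ρ1 π) false))
            - (rhoB ρ0 ρ1 π' * (θ11 * W (Gam1 p00 p10 ρ0 ρ1 π') true + (1 - θ11) * W (Gam1 p00 p10 ρ0 ρ1 π') false)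
              + (1 - rhoB ρ0 ρ1 π') * (θ11 * W (Gam0 p00 p10 ρ0 ρ1 π') true + (1 - θ11) * W (Gam0 p00 p10 ρ0 ρ1 π') false))) := by
      unfold Lact1; ring
    rw [e]
    refine le_trans (abs_add_le _ _) ?_
    rw [rhoB_abs_diff hρ01, abs_mul, abs_of_pos hβ0]
    have := mul_le_mul_of_nonneg_left hBd hβ0.le
    nlinarith [abs_nonneg (p00 - p10)]

lemma TwOp_contract (hp00 : p00 ∈ Icc (0:ℝ) 1) (hp10 : p10 ∈ Icc (0:ℝ) 1)
    (hρ0 : 0 < ρ0) (hρ01 : ρ0 < ρ1) (hρ1 : ρ1 < 1) (hβ : β ∈ Ioo (0:ℝ) 1)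
    (hθ11 : θ11 ∈ Icc (0:ℝ) 1) (hθ01 : θ01 ∈ Icc (0:ℝ) 1) (hθ00 : θ00 ∈ Icc (0:ℝ) 1)
    {M : ℝ} (hM : 0 ≤ M) {W1 W2 : ℝ → Bool → ℝ}
    (hW : ∀ π ∈ Icc (0:ℝ) 1, ∀ y : Bool, |W1 π y - W2 π y| ≤ M) :
    ∀ π ∈ Icc (0:ℝ) 1, ∀ y : Bool,
      |TwOp p00 p10 ρ0 ρ1 β w θ11 θ01 θ00 W1 π y
        - TwOp p00 p10 ρ0 ρ1 β w θ11 θ01 θ00 W2 π y| ≤ β * M := by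
  intro π hπ y
  have hβ0 := hβ.1
  have hcombo : ∀ θ : ℝ, θ ∈ Icc (0:ℝ) 1 → ∀ x, x ∈ Icc (0:ℝ) 1 →
      |(θ * W1 x true + (1 - θ) * W1 x false) - (θ * W2 x true + (1 - θ) * W2 x false)| ≤ M := by
    intro θ hθ x hx
    have h1 := hW x hx true
    have h0 := hW x hx false
    have e : (θ * W1 x true + (1 - θ) * W1 x false) - (θ * W2 x true + (1 - θ) * W2 x false)
        = θ * (W1 x true - W2 x true) + (1 - θ) * (W1 x false - W2 x false) := by ring
    rw [e]
    refine le_trans (abs_add_le _ _) ?_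
    rw [abs_mul, abs_mul, abs_of_nonneg hθ.1, abs_of_nonneg (by linarith [hθ.2] : (0:ℝ) ≤ 1 - θ)]
    have m1 := mul_le_mul_of_nonneg_left h1 hθ.1
    have m0 := mul_le_mul_of_nonneg_left h0 (by linarith [hθ.2] : (0:ℝ) ≤ 1 - θ)
    nlinarith
  have hpass : ∀ θ : ℝ, θ ∈ Icc (0:ℝ) 1 → ∀ c : ℝ,
      |(c + β * (θ * W1 (gam p00 p10 π) true + (1 - θ) * W1 (gam p00 p10 π) false))
        - (c + β * (θ * W2 (gam p00 p10 π) true + (1 - θ) * W2 (gam p00 p10 π) false))|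
      ≤ β * M := by
    intro θ hθ c
    have hc := hcombo θ hθ _ (gam_mem hp00 hp10 hπ)
    have e : (c + β * (θ * W1 (gam p00 p10 π) true + (1 - θ) * W1 (gam p00 p10 π) false))
        - (c + β * (θ * W2 (gam p00 p10 π) true + (1 - θ) * W2 (gam p00 p10 π) false))
      = β * ((θ * W1 (gam p00 p10 π) true + (1 - θ) * W1 (gam p00 p10 π) false)
          - (θ * W2 (gam p00 p10 π) true + (1 - θ) * W2 (gam p00 p10 π) false)) := by ring
    rw [e, abs_mul, abs_of_pos hβ0]
    exact mul_le_mul_of_nonneg_left hc hβ0.le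
  cases y with
  | false => exact hpass θ00 hθ00 w
  | true =>
    show |max (Lact1 p00 p10 ρ0 ρ1 β θ11 W1 π) (Lact0a p00 p10 β w θ01 W1 π)
        - max (Lact1 p00 p10 ρ0 ρ1 β θ11 W2 π) (Lact0a p00 p10 β w θ01 W2 π)| ≤ _
    refine le_trans (abs_max_sub_max_le_max _ _ _ _) (max_le ?_ (hpass θ01 hθ01 w))
    have hr : 0 < rhoB ρ0 ρ1 π := rhoB_pos hρ0 hρ01 hπ
    have hr1 : rhoB ρ0 ρ1 π < 1 := rhoB_lt_one hρ01 hρ1 hπ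
    have hc1 := hcombo θ11 hθ11 _ (Gam1_mem hp00 hp10 hρ0 hρ01 hπ)
    have hc0 := hcombo θ11 hθ11 _ (Gam0_mem hp00 hp10 hρ01 hρ1 hπ)
    have e : Lact1 p00 p10 ρ0 ρ1 β θ11 W1 π - Lact1 p00 p10 ρ0 ρ1 β θ11 W2 π
      = β * rhoB ρ0 ρ1 π * ((θ11 * W1 (Gam1 p00 p10 ρ0 ρ1 π) true + (1 - θ11) * W1 (Gam1 p00 p10 ρ0 ρ1 π) false)
          - (θ11 * W2 (Gam1 p00 p10 ρ0 ρ1 π) true + (1 - θ11) * W2 (Gam1 p00 p10 ρ0 ρ1 π) false))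
        + β * (1 - rhoB ρ0 ρ1 π) * ((θ11 * W1 (Gam0 p00 p10 ρ0 ρ1 π) true + (1 - θ11) * W1 (Gam0 p00 p10 ρ0 ρ1 π) false)
          - (θ11 * W2 (Gam0 p00 p10 ρ0 ρ1 π) true + (1 - θ11) * W2 (Gam0 p00 p10 ρ0 ρ1 π) false)) := by
      unfold Lact1; ring
    rw [e]
    refine le_trans (abs_add_le _ _) ?_
    simp only [abs_mul]
    rw [abs_of_pos hβ0, abs_of_pos hr,
      abs_of_pos (by linarith : (0:ℝ) < 1 - rhoB ρ0 ρ1 π)]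
    have m1 := mul_le_mul_of_nonneg_left hc1 (mul_pos hβ0 hr).le
    have m0 := mul_le_mul_of_nonneg_left hc0 (mul_pos hβ0 (by linarith : (0:ℝ) < 1 - rhoB ρ0 ρ1 π)).le
    nlinarith

end op

/-- **Monotone advantage of playing.** If `ρ1 > ρ0` and either
`0 < p00 − p10 < 1/5` or `0 < p10 − p00 < 1/3`, then the advantage function
`D(π) = L1 V_w(π,1) − L0 V_w(π,1)` is strictly decreasing on `[0,1]`. -/
theorem stmt9 (p00 p10 ρ0 ρ1 β w θ11 θ01 θ00 : ℝ)
    (hp00 : p00 ∈ Icc (0:ℝ) 1) (hp10 : p10 ∈ Icc (0:ℝ) 1)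
    (hρ0 : 0 < ρ0) (hρ01 : ρ0 < ρ1) (hρ1 : ρ1 < 1)
    (hβ : β ∈ Ioo (0:ℝ) 1)
    (hθ11 : θ11 ∈ Icc (0:ℝ) 1) (hθ01 : θ01 ∈ Icc (0:ℝ) 1) (hθ00 : θ00 ∈ Icc (0:ℝ) 1)
    (hp : (0 < p00 - p10 ∧ p00 - p10 < 1/5) ∨ (0 < p10 - p00 ∧ p10 - p00 < 1/3))
    (V : ℝ → Bool → ℝ) (hVb : BddOnIcc V)
    (hVfix : FixedOnIcc (TwOp p00 p10 ρ0 ρ1 β w θ11 θ01 θ00) V) :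
    ∀ π ∈ Icc (0:ℝ) 1, ∀ π' ∈ Icc (0:ℝ) 1, π < π' →
      Lact1 p00 p10 ρ0 ρ1 β θ11 V π' - Lact0a p00 p10 β w θ01 V π'
        < Lact1 p00 p10 ρ0 ρ1 β θ11 V π - Lact0a p00 p10 β w θ01 V π := by
  intro π hπ π' hπ' hlt
  obtain ⟨C0, hC0⟩ := hVb
  have hβ0 := hβ.1
  have hβ1 := hβ.2
  have hδb0 : 0 ≤ |p00 - p10| := abs_nonneg _
  have hδb3 : |p00 - p10| < 1/3 := by
    rcases hp with ⟨h1, h2⟩ | ⟨h1, h2⟩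
    · rw [abs_of_pos h1]; linarith
    · rw [abs_of_neg (by linarith : p00 - p10 < 0)]; linarith
  have hβδ : β * |p00 - p10| < 1/3 := by nlinarith
  have hden : 0 < 1 - β * |p00 - p10| := by linarith
  obtain ⟨Ls, hLs0, hLsfix, hkey⟩ :
      ∃ L : ℝ, 0 ≤ L ∧ (ρ1 - ρ0) + β * (L * |p00 - p10|) ≤ L
        ∧ 2 * (β * |p00 - p10|) * L < ρ1 - ρ0 := by
    refine ⟨(ρ1 - ρ0) / (1 - β * |p00 - p10|), div_nonneg (by linarith) hden.le, ?_, ?_⟩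
    · have e : (ρ1 - ρ0) + β * ((ρ1 - ρ0) / (1 - β * |p00 - p10|) * |p00 - p10|)
          = ((ρ1 - ρ0) * (1 - β * |p00 - p10|) + β * |p00 - p10| * (ρ1 - ρ0))
              / (1 - β * |p00 - p10|) := by
        field_simp
      rw [e]
      apply le_of_eq
      field_simp
      ring
    · have e : 2 * (β * |p00 - p10|) * ((ρ1 - ρ0) / (1 - β * |p00 - p10|))
          = (2 * (β * |p00 - p10|) * (ρ1 - ρ0)) / (1 - β * |p00 - p10|) := by ring
      rw [e, div_lt_iff₀ hden]
      nlinarith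
  set T := TwOp p00 p10 ρ0 ρ1 β w θ11 θ01 θ00 with hT
  set C := max C0 0 with hC
  have hCnn : 0 ≤ C := le_max_right _ _
  have hVC : ∀ x ∈ Icc (0:ℝ) 1, ∀ y : Bool, |V x y| ≤ C :=
    fun x hx y => (hC0 x hx y).trans (le_max_left _ _)
  set Vn : ℕ → ℝ → Bool → ℝ := fun n => T^[n] (fun _ _ => 0) with hVn
  have hVnsucc : ∀ n, Vn (n + 1) = T (Vn n) := by
    intro n; rw [hVn]; exact Function.iterate_succ_apply' T n _
  have hclose : ∀ n, ∀ x ∈ Icc (0:ℝ) 1, ∀ y : Bool, |Vn n x y - V x y| ≤ β ^ n * C := by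
    intro n
    induction n with
    | zero =>
      intro x hx y
      have : Vn 0 x y = 0 := rfl
      rw [this, zero_sub, abs_neg, pow_zero, one_mul]
      exact hVC x hx y
    | succ n ih =>
      intro x hx y
      rw [hVnsucc n]
      have hfix := hVfix x hx y
      rw [show V x y = T V x y from (hfix).symm]
      have hc := TwOp_contract (w := w) hp00 hp10 hρ0 hρ01 hρ1 hβ hθ11 hθ01 hθ00
        (M := β ^ n * C) (by positivity) ih x hx y
      calc |T (Vn n) x y - T V x y| ≤ β * (β ^ n * C) := hc
        _ = β ^ (n + 1) * C := by ring
  have hlip : ∀ n, LipOn Ls (Vn n) := by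
    intro n
    induction n with
    | zero =>
      intro x hx x' hx' y
      have e1 : Vn 0 x y = 0 := rfl
      have e2 : Vn 0 x' y = 0 := rfl
      rw [e1, e2, sub_self, abs_zero]
      positivity
    | succ n ih =>
      intro x hx x' hx' y
      rw [hVnsucc n]
      have h2 := TwOp_lip (w := w) hp00 hp10 hρ0 hρ01 hρ1 hβ hθ11 hθ01 hθ00 hLs0 ih x hx x' hx' y
      exact h2.trans (mul_le_mul_of_nonneg_right hLsfix (abs_nonneg _))
  have hVlip : LipOn Ls V := by
    intro x hx x' hx' y
    have key : ∀ n : ℕ, |V x y - V x' y| ≤ 2 * (β ^ n * C) + Ls * |x - x'| := by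
      intro n
      have a := hclose n x hx y
      have b := hclose n x' hx' y
      have c := hlip n x hx x' hx' y
      have t1 : |V x y - V x' y| ≤ |V x y - Vn n x y| + |Vn n x y - V x' y| :=
        abs_sub_le _ _ _
      have t2 : |Vn n x y - V x' y| ≤ |Vn n x y - Vn n x' y| + |Vn n x' y - V x' y| :=
        abs_sub_le _ _ _
      have t3 : |V x y - Vn n x y| = |Vn n x y - V x y| := abs_sub_comm _ _
      linarith
    have htend : Filter.Tendsto (fun n : ℕ => 2 * (β ^ n * C) + Ls * |x - x'|)
        Filter.atTop (nhds (2 * (0 * C) + Ls * |x - x'|)) := by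
      refine Filter.Tendsto.add ?_ tendsto_const_nhds
      exact (((tendsto_pow_atTop_nhds_zero_of_lt_one hβ0.le hβ1).mul_const C).const_mul 2)
    have := ge_of_tendsto htend (Filter.Eventually.of_forall key)
    simpa using this
  -- final computation
  have hB : |(rhoB ρ0 ρ1 π * (θ11 * V (Gam1 p00 p10 ρ0 ρ1 π) true + (1 - θ11) * V (Gam1 p00 p10 ρ0 ρ1 π) false)
        + (1 - rhoB ρ0 ρ1 π) * (θ11 * V (Gam0 p00 p10 ρ0 ρ1 π) true + (1 - θ11) * V (Gam0 p00 p10 ρ0 ρ1 π) false))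
      - (rhoB ρ0 ρ1 π' * (θ11 * V (Gam1 p00 p10 ρ0 ρ1 π') true + (1 - θ11) * V (Gam1 p00 p10 ρ0 ρ1 π') false)
        + (1 - rhoB ρ0 ρ1 π') * (θ11 * V (Gam0 p00 p10 ρ0 ρ1 π') true + (1 - θ11) * V (Gam0 p00 p10 ρ0 ρ1 π') false))|
      ≤ Ls * (|p00 - p10| * |π - π'|) :=
    B_diff_bound hp00 hp10 hρ0 hρ01 hρ1
      (fun z => θ11 * V z true + (1 - θ11) * V z false) Ls hLs0
      (combo_lip hVlip hθ11) hπ hπ'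
  have hP : |(θ01 * V (gam p00 p10 π) true + (1 - θ01) * V (gam p00 p10 π) false)
      - (θ01 * V (gam p00 p10 π') true + (1 - θ01) * V (gam p00 p10 π') false)|
      ≤ Ls * (|p00 - p10| * |π - π'|) := by
    have := combo_lip hVlip hθ01 _ (gam_mem hp00 hp10 hπ) _ (gam_mem hp00 hp10 hπ')
    rw [gam_abs_diff] at this
    exact this
  have habs : |π - π'| = π' - π := by
    rw [abs_sub_comm]; exact abs_of_pos (by linarith)
  rw [habs] at hB hP
  have hE : (Lact1 p00 p10 ρ0 ρ1 β θ11 V π - Lact0a p00 p10 β w θ01 V π)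
      - (Lact1 p00 p10 ρ0 ρ1 β θ11 V π' - Lact0a p00 p10 β w θ01 V π')
    = (ρ1 - ρ0) * (π' - π)
      + β * ((rhoB ρ0 ρ1 π * (θ11 * V (Gam1 p00 p10 ρ0 ρ1 π) true + (1 - θ11) * V (Gam1 p00 p10 ρ0 ρ1 π) false)
            + (1 - rhoB ρ0 ρ1 π) * (θ11 * V (Gam0 p00 p10 ρ0 ρ1 π) true + (1 - θ11) * V (Gam0 p00 p10 ρ0 ρ1 π) false))
          - (rhoB ρ0 ρ1 π' * (θ11 * V (Gam1 p00 p10 ρ0 ρ1 π') true + (1 - θ11) * V (Gam1 p00 p10 ρ0 ρ1 π') false)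
            + (1 - rhoB ρ0 ρ1 π') * (θ11 * V (Gam0 p00 p10 ρ0 ρ1 π') true + (1 - θ11) * V (Gam0 p00 p10 ρ0 ρ1 π') false)))
      - β * ((θ01 * V (gam p00 p10 π) true + (1 - θ01) * V (gam p00 p10 π) false)
          - (θ01 * V (gam p00 p10 π') true + (1 - θ01) * V (gam p00 p10 π') false)) := by
    unfold Lact1 Lact0a rhoB
    ring
  have hBlo := (abs_le.1 hB).1
  have hPhi := (abs_le.1 hP).2
  have m1 := mul_le_mul_of_nonneg_left hBlo hβ0.le
  have m2 := mul_le_mul_of_nonneg_left hPhi hβ0.le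
  have m3 := mul_lt_mul_of_pos_right hkey (sub_pos.2 hlt)
  have hD : 0 < (Lact1 p00 p10 ρ0 ρ1 β θ11 V π - Lact0a p00 p10 β w θ01 V π)
      - (Lact1 p00 p10 ρ0 ρ1 β θ11 V π' - Lact0a p00 p10 β w θ01 V π') := by
    rw [hE]
    nlinarith
  linarith
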